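/- Let f be continuously differentiable and nowhere zero on Ω and let P := 1 − (1/(f†f)) f f†. Then for D ∈ {L, R}, the matrix M_D := [∂_D P, P] equals (1/(f†f))·(P (∂_D f) f† − f (∂_D f)† P); moreover M_D is skew-Hermitian ((M_D)† = −M_D) and traceless (tr M_D = 0), i.e. M_D takes values in the Lie algebra su(N). -/

import Mathlib

open Matrix

noncomputable section

attribute [local instance] Matrix.normedAddCommGroup Matrix.normedSpace

/-- Vectors in ℂ^N. -/
abbrev Vec (N : ℕ) := Fin N → ℂ

/-- Hermitian inner product v† w. -/
def hermIP {N : ℕ} (v w : Vec N) : ℂ := dotProduct (star v) w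

/-- The matrix v w†. -/
def outerM {N : ℕ} (v w : Vec N) : Matrix (Fin N) (Fin N) ℂ := vecMulVec v (star w)

/-- The projector P = 1 − (1/(f†f)) f f†. -/
def projM {N : ℕ} (f : Vec N) : Matrix (Fin N) (Fin N) ℂ :=
  1 - (1 / hermIP f f) • outerM f f

/-- Matrix commutator [A,B] = AB − BA. -/
def mcomm {N : ℕ} (A B : Matrix (Fin N) (Fin N) ℂ) : Matrix (Fin N) (Fin N) ℂ :=
  A * B - B * A

/-- Light-cone direction ξ_L. -/
def dL : ℝ × ℝ := (1, 0)

/-- Light-cone direction ξ_R. -/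
def dR : ℝ × ℝ := (0, 1)

/-- Directional (partial) derivative in direction `v`. -/
def pdv {E : Type*} [NormedAddCommGroup E] [NormedSpace ℝ E]
    (v : ℝ × ℝ) (g : ℝ × ℝ → E) (p : ℝ × ℝ) : E := fderiv ℝ g p v

/-- The CP^{N−1} Euler–Lagrange equation
P·(∂_L∂_R f − (1/(f†f))((f†∂_Rf)∂_Lf + (f†∂_Lf)∂_Rf)) = 0 at a point. -/
def EL {N : ℕ} (f : ℝ × ℝ → Vec N) (p : ℝ × ℝ) : Prop :=
  projM (f p) *ᵥ (pdv dL (fun q => pdv dR f q) p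
    - (1 / hermIP (f p) (f p)) • (hermIP (f p) (pdv dR f p) • pdv dL f p
      + hermIP (f p) (pdv dL f p) • pdv dR f p)) = 0

/-! ### Auxiliary algebraic lemmas -/

section Aux

variable {N : ℕ}

lemma outerM_mul_outerM (x y z w : Vec N) :
    outerM x y * outerM z w = hermIP y z • outerM x w := by
  ext i j
  simp only [Matrix.mul_apply, outerM, Matrix.vecMulVec_apply, Matrix.smul_apply,
    hermIP, dotProduct, Pi.star_apply, smul_eq_mul, Finset.sum_mul]
  exact Finset.sum_congr rfl fun k _ => by ring

lemma outerM_mulVec (x y z : Vec N) : outerM x y *ᵥ z = hermIP y z • x := by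
  ext i
  simp only [Matrix.mulVec, outerM, Matrix.vecMulVec_apply, dotProduct, hermIP, Pi.star_apply,
    Pi.smul_apply, smul_eq_mul, Finset.sum_mul]
  exact Finset.sum_congr rfl fun k _ => by ring

lemma outerM_sub_left (x y z : Vec N) : outerM (x - y) z = outerM x z - outerM y z := by
  ext i j; simp [outerM, Matrix.vecMulVec_apply, sub_mul]

lemma outerM_smul_left (c : ℂ) (x z : Vec N) : outerM (c • x) z = c • outerM x z := by
  ext i j; simp [outerM, Matrix.vecMulVec_apply, mul_assoc]

lemma outerM_conjT (x y : Vec N) : (outerM x y)ᴴ = outerM y x := by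
  ext i j; simp [outerM, Matrix.conjTranspose_apply, Matrix.vecMulVec_apply, mul_comm]

lemma trace_outerM (x y : Vec N) : (outerM x y).trace = hermIP y x := by
  simp [Matrix.trace, Matrix.diag, outerM, Matrix.vecMulVec_apply, hermIP, dotProduct, mul_comm]

lemma star_hermIP (x y : Vec N) : star (hermIP x y) = hermIP y x := by
  simp [hermIP, dotProduct, star_sum, star_mul', mul_comm]

lemma alg_comm (a u : Vec N) (hz : hermIP a a ≠ 0) (c : ℂ) :
    mcomm (c • outerM a a - (hermIP a a)⁻¹ • (outerM u a + outerM a u)) (projM a) =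
      (1 / hermIP a a) • (outerM (projM a *ᵥ u) a - outerM a u * projM a) := by
  simp only [mcomm, projM, one_div, Matrix.sub_mulVec, Matrix.smul_mulVec,
    Matrix.one_mulVec, outerM_mulVec, outerM_sub_left, outerM_smul_left,
    sub_mul, mul_sub, add_mul, mul_add, Matrix.mul_one, Matrix.one_mul,
    Matrix.smul_mul, Matrix.mul_smul, outerM_mul_outerM, smul_smul, smul_sub, smul_add]
  match_scalars <;> (field_simp; try ring)

lemma alg_skew (a u : Vec N) (c : ℂ) (hc : star c = c) :
    (mcomm (c • outerM a a - (hermIP a a)⁻¹ • (outerM u a + outerM a u)) (projM a))ᴴ =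
      - mcomm (c • outerM a a - (hermIP a a)⁻¹ • (outerM u a + outerM a u)) (projM a) := by
  simp only [mcomm, projM, one_div,
    sub_mul, mul_sub, add_mul, mul_add, Matrix.mul_one, Matrix.one_mul,
    Matrix.smul_mul, Matrix.mul_smul, outerM_mul_outerM, smul_smul, smul_sub, smul_add,
    Matrix.conjTranspose_sub, Matrix.conjTranspose_add, Matrix.conjTranspose_smul,
    outerM_conjT, star_mul', star_inv₀, star_hermIP, hc, neg_sub]
  match_scalars <;> ring

lemma alg_trace (a u : Vec N) (c : ℂ) :
    (mcomm (c • outerM a a - (hermIP a a)⁻¹ • (outerM u a + outerM a u)) (projM a)).trace = 0 := by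
  simp only [mcomm, projM, one_div,
    sub_mul, mul_sub, add_mul, mul_add, Matrix.mul_one, Matrix.one_mul,
    Matrix.smul_mul, Matrix.mul_smul, outerM_mul_outerM, smul_smul, smul_sub, smul_add,
    Matrix.trace_sub, Matrix.trace_add, Matrix.trace_smul, trace_outerM, smul_eq_mul]
  ring

/-! ### The derivative of the projector -/

lemma entry_hasFDeriv (f : ℝ × ℝ → Vec N) (p v : ℝ × ℝ)
    (hd : DifferentiableAt ℝ f p) (hz : hermIP (f p) (f p) ≠ 0) (i j : Fin N) :
    ∃ L : (ℝ × ℝ) →L[ℝ] ℂ, HasFDerivAt (fun q => projM (f q) i j) L p ∧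
      L v = ((hermIP (f p) (pdv v f p) + hermIP (pdv v f p) (f p)) *
              (hermIP (f p) (f p) ^ 2)⁻¹) * (f p i * star (f p j))
          - (hermIP (f p) (f p))⁻¹ *
              (pdv v f p i * star (f p j) + f p i * star (pdv v f p j)) := by
  have hdf : HasFDerivAt f (fderiv ℝ f p) p := hd.hasFDerivAt
  have hco : ∀ k, HasFDerivAt (fun q => f q k)
      ((ContinuousLinearMap.proj k).comp (fderiv ℝ f p)) p :=
    fun k => hasFDerivAt_pi'.1 hdf k
  have hst : ∀ k, HasFDerivAt (fun q => star (f q k))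
      ((Complex.conjCLE : ℂ →L[ℝ] ℂ).comp
        ((ContinuousLinearMap.proj k).comp (fderiv ℝ f p))) p :=
    fun k => ((Complex.conjCLE : ℂ →L[ℝ] ℂ).hasFDerivAt).comp p (hco k)
  have hH : HasFDerivAt (fun q => hermIP (f q) (f q))
      (∑ k, (star (f p k) • ((ContinuousLinearMap.proj k).comp (fderiv ℝ f p))
        + f p k • ((Complex.conjCLE : ℂ →L[ℝ] ℂ).comp
            ((ContinuousLinearMap.proj k).comp (fderiv ℝ f p))))) p := by
    have e : (fun q => hermIP (f q) (f q)) = fun q => ∑ k, star (f q k) * f q k := by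
      funext q; simp [hermIP, dotProduct]
    rw [e]
    exact HasFDerivAt.fun_sum fun k _ => (hst k).mul (hco k)
  have hinv := ((hasFDerivAt_inv hz).restrictScalars ℝ).comp p hH
  have hm := (hco i).mul (hst j)
  have hfinal := (hinv.mul hm).const_sub ((1 : Matrix (Fin N) (Fin N) ℂ) i j)
  have e : (fun q => projM (f q) i j) = fun q => (1 : Matrix (Fin N) (Fin N) ℂ) i j
      - (hermIP (f q) (f q))⁻¹ * (f q i * star (f q j)) := by
    funext q
    simp [projM, outerM, Matrix.sub_apply, Matrix.smul_apply, Matrix.vecMulVec_apply,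
      one_div, smul_eq_mul]
  rw [e]
  refine ⟨_, hfinal, ?_⟩
  simp only [pdv, ContinuousLinearMap.neg_apply, ContinuousLinearMap.add_apply,
      ContinuousLinearMap.coe_smul', Pi.smul_apply, ContinuousLinearMap.coe_comp',
      Function.comp_apply, ContinuousLinearMap.coe_restrictScalars',
      ContinuousLinearMap.smulRight_apply, ContinuousLinearMap.one_apply,
      ContinuousLinearMap.coe_sum', Finset.sum_apply, ContinuousLinearMap.proj_apply,
      Complex.conjCLE_apply, ContinuousLinearEquiv.coe_coe, smul_eq_mul,
      hermIP, dotProduct, Pi.star_apply, Finset.sum_add_distrib, Finset.sum_mul,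
      Complex.star_def, ContinuousLinearMap.toSpanSingleton_apply, Pi.mul_apply]
  rw [Finset.sum_congr rfl fun x (_ : x ∈ Finset.univ) =>
    mul_comm ((starRingEnd ℂ) ((fderiv ℝ f p) v x)) (f p x)]
  ring

lemma pdv_projM (f : ℝ × ℝ → Vec N) (p v : ℝ × ℝ)
    (hd : DifferentiableAt ℝ f p) (hz : hermIP (f p) (f p) ≠ 0) :
    pdv v (fun q => projM (f q)) p =
      ((hermIP (f p) (pdv v f p) + hermIP (pdv v f p) (f p)) * (hermIP (f p) (f p) ^ 2)⁻¹)
          • outerM (f p) (f p)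
        - (hermIP (f p) (f p))⁻¹ • (outerM (pdv v f p) (f p) + outerM (f p) (pdv v f p)) := by
  have h1 : ∀ i j, ∃ L : (ℝ × ℝ) →L[ℝ] ℂ, HasFDerivAt (fun q => projM (f q) i j) L p ∧
      L v = ((hermIP (f p) (pdv v f p) + hermIP (pdv v f p) (f p)) *
              (hermIP (f p) (f p) ^ 2)⁻¹) * (f p i * star (f p j))
          - (hermIP (f p) (f p))⁻¹ *
              (pdv v f p i * star (f p j) + f p i * star (pdv v f p j)) :=
    entry_hasFDeriv f p v hd hz
  choose L hL hLv using h1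
  have hmat : HasFDerivAt (fun q => projM (f q))
      (ContinuousLinearMap.pi fun i => ContinuousLinearMap.pi fun j => L i j) p :=
    hasFDerivAt_pi.2 fun i => hasFDerivAt_pi.2 fun j => hL i j
  have : pdv v (fun q => projM (f q)) p = fun i j => L i j v := by
    have h2 : fderiv (F := Fin N → Fin N → ℂ) ℝ (fun q => projM (f q)) p =
        ContinuousLinearMap.pi fun i => ContinuousLinearMap.pi fun j => L i j :=
      (hasFDerivAt_pi.2 fun i => hasFDerivAt_pi.2 fun j => hL i j).fderiv
    rw [pdv]; exact congrArg (fun L : (ℝ × ℝ) →L[ℝ] (Fin N → Fin N → ℂ) => L v) h2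
  rw [this]
  ext i j
  rw [hLv i j]
  simp [outerM, Matrix.sub_apply, Matrix.smul_apply, Matrix.add_apply,
    Matrix.vecMulVec_apply, smul_eq_mul]
  ring

end Aux

theorem stmt2 {N : ℕ} (hN : 2 ≤ N) (Ω : Set (ℝ × ℝ)) (hΩ : IsOpen Ω)
    (f : ℝ × ℝ → Vec N) (hf : ContDiffOn ℝ 1 f Ω) (hfz : ∀ p ∈ Ω, f p ≠ 0) :
    ∀ p ∈ Ω, ∀ v ∈ ({dL, dR} : Set (ℝ × ℝ)),
      mcomm (pdv v (fun q => projM (f q)) p) (projM (f p)) =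
        (1 / hermIP (f p) (f p)) •
          (outerM (projM (f p) *ᵥ pdv v f p) (f p)
            - outerM (f p) (pdv v f p) * projM (f p)) ∧
      (mcomm (pdv v (fun q => projM (f q)) p) (projM (f p)))ᴴ
        = - mcomm (pdv v (fun q => projM (f q)) p) (projM (f p)) ∧
      (mcomm (pdv v (fun q => projM (f q)) p) (projM (f p))).trace = 0 := by
  intro p hp w _
  have hz : hermIP (f p) (f p) ≠ 0 := by
    intro h0
    apply hfz p hp
    have h1 : ∑ k, Complex.normSq (f p k) = 0 := by
      have h2 : ((∑ k, Complex.normSq (f p k) : ℝ) : ℂ) = 0 := by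
        rw [← h0]
        push_cast
        simp [hermIP, dotProduct, Complex.normSq_eq_conj_mul_self]
      exact_mod_cast h2
    have h3 := (Finset.sum_eq_zero_iff_of_nonneg
      (fun k _ => Complex.normSq_nonneg (f p k))).1 h1
    funext k
    exact Complex.normSq_eq_zero.1 (h3 k (Finset.mem_univ k))
  have hd : DifferentiableAt ℝ f p :=
    (hf.contDiffAt (hΩ.mem_nhds hp)).differentiableAt one_ne_zero
  have hP := pdv_projM f p w hd hz
  rw [hP]
  set a := f p
  set u := pdv w f p
  set c : ℂ := (hermIP a u + hermIP u a) * (hermIP a a ^ 2)⁻¹ with hcdef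
  have hc : star c = c := by
    rw [hcdef]
    simp only [star_mul', star_add, star_inv₀, star_pow, star_hermIP]
    ring
  exact ⟨alg_comm a u hz c, alg_skew a u c hc, alg_trace a u c⟩
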